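/- Let y, q ∈ ℝ^m with y ≠ q and let ε > 0. Then there exists δ > 0 such that for every r with ‖y − q‖ ≤ r < ‖y − q‖ + δ and every x ∈ ℝ^m with ‖x − q‖ ≤ r and ‖x − y‖ > ε, setting e = (y − q)/‖y − q‖, one has ⟨e, x − q⟩ ≤ ‖y − q‖ − ε²/(4‖y − q‖). -/

import Mathlib

/-- For `y ≠ q` and `ε > 0`, there is `δ > 0` such that whenever
`‖y - q‖ ≤ r < ‖y - q‖ + δ`, `‖x - q‖ ≤ r` and `‖x - y‖ > ε`, setting
`e = (y - q)/‖y - q‖`, one has `⟨e, x - q⟩ ≤ ‖y - q‖ - ε²/(4‖y - q‖)`. -/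
theorem exists_delta_inner_le {m : ℕ} (y q : EuclideanSpace ℝ (Fin m))
    (hyq : y ≠ q) (ε : ℝ) (hε : 0 < ε) :
    ∃ δ > 0, ∀ r : ℝ, ‖y - q‖ ≤ r → r < ‖y - q‖ + δ →
      ∀ x : EuclideanSpace ℝ (Fin m), ‖x - q‖ ≤ r → ε < ‖x - y‖ →
        (inner ℝ (‖y - q‖⁻¹ • (y - q)) (x - q) : ℝ) ≤
          ‖y - q‖ - ε ^ 2 / (4 * ‖y - q‖) := by
  set R : ℝ := ‖y - q‖ with hRdef
  have hR : 0 < R := by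
    simpa [hRdef] using norm_pos_iff.mpr (sub_ne_zero.mpr hyq)
  refine ⟨min 1 (ε ^ 2 / (2 * (2 * R + 1))), by positivity, ?_⟩
  intro r hr1 hr2 x hx hxy
  have hδ1 : min 1 (ε ^ 2 / (2 * (2 * R + 1))) ≤ 1 := min_le_left _ _
  have hδ2 : min 1 (ε ^ 2 / (2 * (2 * R + 1))) ≤ ε ^ 2 / (2 * (2 * R + 1)) :=
    min_le_right _ _
  have hkey : ε ^ 2 < ‖(x - q) - (y - q)‖ ^ 2 := by
    have : (x - q) - (y - q) = x - y := by abel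
    rw [this]
    exact pow_lt_pow_left₀ hxy hε.le two_ne_zero
  rw [@norm_sub_sq_real] at hkey
  rw [real_inner_smul_left, real_inner_comm]
  rw [inv_mul_le_iff₀ hR]
  have hx2 : ‖x - q‖ ^ 2 ≤ r ^ 2 := pow_le_pow_left₀ (norm_nonneg _) hx 2
  have hδ3 : (min 1 (ε ^ 2 / (2 * (2 * R + 1)))) * (2 * R + 1) ≤ ε ^ 2 / 2 := by
    have := mul_le_mul_of_nonneg_right hδ2 (by positivity : (0:ℝ) ≤ 2 * R + 1)
    calc (min 1 (ε ^ 2 / (2 * (2 * R + 1)))) * (2 * R + 1) ≤ _ := this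
      _ = ε ^ 2 / 2 := by field_simp
  have h4 : ε ^ 2 / (4 * R) * R = ε ^ 2 / 4 := by field_simp
  have hδpos : 0 ≤ min 1 (ε ^ 2 / (2 * (2 * R + 1))) := by positivity
  nlinarith [norm_nonneg (x - q), sq_nonneg (r - R), hr1.trans_lt hr2, hR.le.trans hr1]
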